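/- Let B ∈ (0,1) solve equation (B) and let A ∈ (0,1) solve equation (A) with this B, and define U and V₀ (with the constant K) as below. Then V₀(x) ≤ U(|x|) for every x with |x| < A. -/

import Mathlib

noncomputable section

/-- The function `U₁(x) = (c₁(1-x)/(4μ²))·(ln((1+x)/(1-x)) + 2/(1-B²))`. -/
def U₁ (μ c₁ B x : ℝ) : ℝ :=
  c₁ * (1 - x) / (4 * μ ^ 2) * (Real.log ((1 + x) / (1 - x)) + 2 / (1 - B ^ 2))

/-- The function `U` of the switching problem: `U(x) = U₁(x)` for `x ∈ (-B, 1]` and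
`U(x) = U₁(-x) + c₂` for `x ∈ (-1, -B]`. -/
def Ufun (μ c₁ c₂ B x : ℝ) : ℝ :=
  if -B < x then U₁ μ c₁ B x else U₁ μ c₁ B (-x) + c₂

/-- The constant `K` of the continuous-fit condition. -/
def Kconst (μ c₀ c₁ A B : ℝ) : ℝ :=
  (c₁ * (1 - A) / (4 * μ ^ 2) + c₀ * A / (2 * μ ^ 2)) * Real.log ((1 + A) / (1 - A))
    + c₁ * (1 - A) / (2 * μ ^ 2 * (1 - B ^ 2))

/-- The function `V₀(x) = (c₀x/(2μ²))·ln((1-x)/(1+x)) + K`. -/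
def V₀ (μ c₀ c₁ A B x : ℝ) : ℝ :=
  c₀ * x / (2 * μ ^ 2) * Real.log ((1 - x) / (1 + x)) + Kconst μ c₀ c₁ A B

/-- Auxiliary: the derivative of `2μ²(U₁ - V₀)` expressed with split logarithms. -/
def hfun (c₀ c₁ B x : ℝ) : ℝ :=
  (c₀ - c₁ / 2) * (Real.log (1 + x) - Real.log (1 - x)) + (c₁ - c₀) / (1 + x)
    + c₀ / (1 - x) - c₁ / (1 - B ^ 2)

/-- Auxiliary: `G = U₁ - V₀` with split logarithms. -/
def Gfun (μ c₀ c₁ A B x : ℝ) : ℝ :=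
  c₁ * (1 - x) / (4 * μ ^ 2) * ((Real.log (1 + x) - Real.log (1 - x)) + 2 / (1 - B ^ 2))
    + c₀ * x / (2 * μ ^ 2) * (Real.log (1 + x) - Real.log (1 - x)) - Kconst μ c₀ c₁ A B

lemma hasDerivAt_L (x : ℝ) (h1 : (1:ℝ) + x ≠ 0) (h2 : (1:ℝ) - x ≠ 0) :
    HasDerivAt (fun y : ℝ => Real.log (1 + y) - Real.log (1 - y))
      (1 / (1 + x) + 1 / (1 - x)) x := by
  have d1 : HasDerivAt (fun y : ℝ => 1 + y) 1 x := by
    simpa using (hasDerivAt_id x).const_add 1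
  have d2 : HasDerivAt (fun y : ℝ => 1 - y) (-1) x := by
    simpa using (hasDerivAt_id x).const_sub 1
  have := (d1.log h1).sub (d2.log h2)
  refine this.congr_deriv ?_
  field_simp
  ring

lemma hfun_deriv (c₀ c₁ B x : ℝ) (hx : x ∈ Set.Ioo (-1 : ℝ) 1) :
    HasDerivAt (hfun c₀ c₁ B) (2 * (2 * c₀ - c₁ + c₁ * x) / (1 - x ^ 2) ^ 2) x := by
  have h1 : (1:ℝ) + x ≠ 0 := by nlinarith [hx.1, hx.2]
  have h2 : (1:ℝ) - x ≠ 0 := by nlinarith [hx.1, hx.2]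
  have d1 : HasDerivAt (fun y : ℝ => 1 + y) 1 x := by
    simpa using (hasDerivAt_id x).const_add 1
  have d2 : HasDerivAt (fun y : ℝ => 1 - y) (-1) x := by
    simpa using (hasDerivAt_id x).const_sub 1
  have dL := hasDerivAt_L x h1 h2
  have d3 := (hasDerivAt_const x (c₁ - c₀)).div d1 h1
  have d4 := (hasDerivAt_const x c₀).div d2 h2
  have H : HasDerivAt (hfun c₀ c₁ B) _ x :=
    (((dL.const_mul (c₀ - c₁ / 2)).add d3).add d4).sub_const (c₁ / (1 - B ^ 2))
  convert H using 1
  have hs : (1:ℝ) - x ^ 2 = (1 - x) * (1 + x) := by ring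
  rw [hs]
  field_simp
  ring

lemma Gfun_deriv (μ c₀ c₁ A B x : ℝ) (hμ : μ ≠ 0) (hx : x ∈ Set.Ioo (-1 : ℝ) 1) :
    HasDerivAt (Gfun μ c₀ c₁ A B) (hfun c₀ c₁ B x / (2 * μ ^ 2)) x := by
  have h1 : (1:ℝ) + x ≠ 0 := by nlinarith [hx.1, hx.2]
  have h2 : (1:ℝ) - x ≠ 0 := by nlinarith [hx.1, hx.2]
  have dL := hasDerivAt_L x h1 h2
  have dc1 : HasDerivAt (fun y : ℝ => c₁ * (1 - y) / (4 * μ ^ 2)) (-c₁ / (4 * μ ^ 2)) x := by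
    have : HasDerivAt (fun y : ℝ => 1 - y) (-1) x := by
      simpa using (hasDerivAt_id x).const_sub 1
    have := (this.const_mul c₁).div_const (4 * μ ^ 2)
    refine this.congr_deriv ?_
    ring
  have dc2 : HasDerivAt (fun y : ℝ => c₀ * y / (2 * μ ^ 2)) (c₀ / (2 * μ ^ 2)) x := by
    have := ((hasDerivAt_id x).const_mul c₀).div_const (2 * μ ^ 2)
    refine this.congr_deriv ?_
    ring
  have H : HasDerivAt (Gfun μ c₀ c₁ A B) _ x :=
    ((dc1.mul (dL.add_const (2 / (1 - B ^ 2)))).add (dc2.mul dL)).sub_const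
      (Kconst μ c₀ c₁ A B)
  convert H using 1
  unfold hfun
  field_simp
  ring

/-- Key monotonicity lemma: `0 ≤ G` on `[0, A)`. -/
lemma Gfun_nonneg (μ c₀ c₁ A B : ℝ) (hμ : 0 < μ) (hc₀ : 0 < c₀) (hc₁ : 0 < c₁)
    (hB : B ∈ Set.Ioo (0 : ℝ) 1) (hA : A ∈ Set.Ioo (0 : ℝ) 1)
    (hhA : hfun c₀ c₁ B A = 0) (hGA : Gfun μ c₀ c₁ A B A = 0) :
    ∀ a : ℝ, 0 ≤ a → a < A → 0 ≤ Gfun μ c₀ c₁ A B a := by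
  obtain ⟨hA0, hA1⟩ := hA
  obtain ⟨hB0, hB1⟩ := hB
  have hB2 : (0:ℝ) < 1 - B ^ 2 := by nlinarith
  have hsub : Set.Icc (0:ℝ) A ⊆ Set.Ioo (-1 : ℝ) 1 := by
    intro y hy; exact ⟨by linarith [hy.1], by linarith [hy.2]⟩
  -- h(0) < 0
  have h0 : hfun c₀ c₁ B 0 < 0 := by
    have : hfun c₀ c₁ B 0 = c₁ - c₁ / (1 - B ^ 2) := by
      unfold hfun; simp
    rw [this]
    rw [sub_neg, lt_div_iff₀ hB2]
    have hpos : 0 < c₁ * B ^ 2 := by positivity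
    nlinarith [hpos]
  -- derivative sign helpers
  have hderivpos : ∀ y ∈ Set.Ioo (-1 : ℝ) 1, 1 - 2 * c₀ / c₁ < y →
      0 < 2 * (2 * c₀ - c₁ + c₁ * y) / (1 - y ^ 2) ^ 2 := by
    intro y hy hy'
    have hden : (0:ℝ) < (1 - y ^ 2) ^ 2 := by
      have : (0:ℝ) < 1 - y ^ 2 := by nlinarith [hy.1, hy.2]
      positivity
    apply div_pos _ hden
    have : 2 * c₀ / c₁ * c₁ = 2 * c₀ := by field_simp
    nlinarith [mul_lt_mul_of_pos_left hy' hc₁]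
  have hderivneg : ∀ y ∈ Set.Ioo (-1 : ℝ) 1, y < 1 - 2 * c₀ / c₁ →
      2 * (2 * c₀ - c₁ + c₁ * y) / (1 - y ^ 2) ^ 2 < 0 := by
    intro y hy hy'
    have hden : (0:ℝ) < (1 - y ^ 2) ^ 2 := by
      have : (0:ℝ) < 1 - y ^ 2 := by nlinarith [hy.1, hy.2]
      positivity
    apply div_neg_of_neg_of_pos _ hden
    have : 2 * c₀ / c₁ * c₁ = 2 * c₀ := by field_simp
    nlinarith [mul_lt_mul_of_pos_left hy' hc₁]
  set x₀ : ℝ := 1 - 2 * c₀ / c₁ with hx₀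
  -- continuity of h on subsets of Ioo (-1) 1
  have hcont : ∀ s : Set ℝ, s ⊆ Set.Ioo (-1 : ℝ) 1 → ContinuousOn (hfun c₀ c₁ B) s := by
    intro s hs y hy
    exact ((hfun_deriv c₀ c₁ B y (hs hy)).continuousAt).continuousWithinAt
  -- x₀ < A
  have hx₀A : x₀ < A := by
    by_contra hcon
    push_neg at hcon
    have hanti : StrictAntiOn (hfun c₀ c₁ B) (Set.Icc 0 A) := by
      apply strictAntiOn_of_deriv_neg (convex_Icc 0 A) (hcont _ hsub)
      intro y hy
      rw [interior_Icc] at hy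
      have hy' : y ∈ Set.Ioo (-1 : ℝ) 1 := hsub ⟨le_of_lt hy.1, le_of_lt hy.2⟩
      rw [(hfun_deriv c₀ c₁ B y hy').deriv]
      exact hderivneg y hy' (lt_of_lt_of_le hy.2 hcon)
    have := hanti (Set.left_mem_Icc.mpr (le_of_lt hA0))
      (Set.right_mem_Icc.mpr (le_of_lt hA0)) hA0
    rw [hhA] at this
    linarith
  set t : ℝ := max x₀ 0 with ht
  have ht0 : 0 ≤ t := le_max_right _ _
  have htA : t < A := max_lt hx₀A hA0
  -- h strictly increasing on [t, A]
  have hmono : StrictMonoOn (hfun c₀ c₁ B) (Set.Icc t A) := by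
    have hsub' : Set.Icc t A ⊆ Set.Ioo (-1 : ℝ) 1 := by
      intro y hy; exact hsub ⟨le_trans ht0 hy.1, hy.2⟩
    apply strictMonoOn_of_deriv_pos (convex_Icc t A) (hcont _ hsub')
    intro y hy
    rw [interior_Icc] at hy
    have hy' : y ∈ Set.Ioo (-1 : ℝ) 1 := hsub' ⟨le_of_lt hy.1, le_of_lt hy.2⟩
    rw [(hfun_deriv c₀ c₁ B y hy').deriv]
    exact hderivpos y hy' (lt_of_le_of_lt (le_max_left _ _) hy.1)
  -- h antitone on [0, t]
  have hanti : AntitoneOn (hfun c₀ c₁ B) (Set.Icc 0 t) := by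
    have hsub' : Set.Icc (0:ℝ) t ⊆ Set.Ioo (-1 : ℝ) 1 := by
      intro y hy; exact hsub ⟨hy.1, le_trans hy.2 (le_of_lt htA)⟩
    apply antitoneOn_of_deriv_nonpos (convex_Icc 0 t) (hcont _ hsub')
    · intro y hy
      rw [interior_Icc] at hy
      have hy' : y ∈ Set.Ioo (-1 : ℝ) 1 := hsub' ⟨le_of_lt hy.1, le_of_lt hy.2⟩
      exact ((hfun_deriv c₀ c₁ B y hy').differentiableAt).differentiableWithinAt
    · intro y hy
      rw [interior_Icc] at hy
      have hy' : y ∈ Set.Ioo (-1 : ℝ) 1 := hsub' ⟨le_of_lt hy.1, le_of_lt hy.2⟩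
      rw [(hfun_deriv c₀ c₁ B y hy').deriv]
      have hyx₀ : y < x₀ := by
        have htpos : 0 < t := lt_trans hy.1 hy.2
        have : t = x₀ := by
          rcases max_choice x₀ 0 with h | h
          · exact h
          · rw [ht] at htpos; rw [h] at htpos; linarith
        rw [← this]; exact hy.2
      exact le_of_lt (hderivneg y hy' hyx₀)
  -- h < 0 on [0, A)
  have hneg : ∀ a : ℝ, 0 ≤ a → a < A → hfun c₀ c₁ B a < 0 := by
    intro a ha0 haA
    rcases le_or_gt t a with h | h
    · have := hmono ⟨h, le_of_lt haA⟩ ⟨le_of_lt htA, le_refl A⟩ haA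
      rw [hhA] at this; exact this
    · have := hanti ⟨le_refl 0, ht0⟩ ⟨ha0, le_of_lt h⟩ ha0
      linarith
  -- G antitone on [0, A]
  have hGanti : AntitoneOn (Gfun μ c₀ c₁ A B) (Set.Icc 0 A) := by
    apply antitoneOn_of_deriv_nonpos (convex_Icc 0 A)
    · intro y hy
      exact ((Gfun_deriv μ c₀ c₁ A B y (ne_of_gt hμ) (hsub hy)).continuousAt).continuousWithinAt
    · intro y hy
      rw [interior_Icc] at hy
      have hy' : y ∈ Set.Ioo (-1 : ℝ) 1 := hsub ⟨le_of_lt hy.1, le_of_lt hy.2⟩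
      exact ((Gfun_deriv μ c₀ c₁ A B y (ne_of_gt hμ) hy').differentiableAt).differentiableWithinAt
    · intro y hy
      rw [interior_Icc] at hy
      have hy' : y ∈ Set.Ioo (-1 : ℝ) 1 := hsub ⟨le_of_lt hy.1, le_of_lt hy.2⟩
      rw [(Gfun_deriv μ c₀ c₁ A B y (ne_of_gt hμ) hy').deriv]
      apply div_nonpos_of_nonpos_of_nonneg
      · exact le_of_lt (hneg y (le_of_lt hy.1) hy.2)
      · positivity
  intro a ha0 haA
  have := hGanti ⟨ha0, le_of_lt haA⟩ ⟨le_of_lt hA0, le_refl A⟩ (le_of_lt haA)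
  rw [hGA] at this
  exact this

/-- Let `B ∈ (0,1)` solve equation (B) and let `A ∈ (0,1)` solve
equation (A) with this `B`. Then `V₀(x) ≤ U(|x|)` for every `x` with `|x| < A`. -/
theorem V₀_le_U (μ c₀ c₁ c₂ : ℝ) (hμ : 0 < μ) (hc₀ : 0 < c₀) (hc₁ : 0 < c₁)
    (hc₂ : 0 < c₂) (A B : ℝ) (hB : B ∈ Set.Ioo (0 : ℝ) 1)
    (hBeq : Real.log ((1 - B) / (1 + B)) + 2 * B / (1 - B ^ 2) = 2 * μ ^ 2 * c₂ / c₁)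
    (hA : A ∈ Set.Ioo (0 : ℝ) 1)
    (hAeq : (c₁ / (2 * c₀) - 1) * Real.log ((1 - A) / (1 + A))
        + (2 / (1 + A)) * (c₁ / (2 * c₀) + A / (1 - A)) = c₁ / (c₀ * (1 - B ^ 2))) :
    ∀ x : ℝ, |x| < A → V₀ μ c₀ c₁ A B x ≤ Ufun μ c₁ c₂ B |x| := by
  have hA0 := hA.1
  have hA1 := hA.2
  have hB0 := hB.1
  have hB1 := hB.2
  have hB2 : (0:ℝ) < 1 - B ^ 2 := by nlinarith
  have h1A : (0:ℝ) < 1 + A := by linarith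
  have h2A : (0:ℝ) < 1 - A := by linarith
  -- h(A) = 0
  have hhA : hfun c₀ c₁ B A = 0 := by
    rw [Real.log_div (ne_of_gt h2A) (ne_of_gt h1A)] at hAeq
    have key : hfun c₀ c₁ B A =
        c₀ * (((c₁ / (2 * c₀) - 1) * (Real.log (1 - A) - Real.log (1 + A))
          + (2 / (1 + A)) * (c₁ / (2 * c₀) + A / (1 - A))) - c₁ / (c₀ * (1 - B ^ 2))) := by
      unfold hfun
      field_simp
      ring
    rw [key, hAeq]
    ring
  -- G(A) = 0
  have hGA : Gfun μ c₀ c₁ A B A = 0 := by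
    unfold Gfun Kconst
    rw [Real.log_div (ne_of_gt h1A) (ne_of_gt h2A)]
    field_simp
    ring
  intro x hx
  have ha0 : (0:ℝ) ≤ |x| := abs_nonneg x
  have ha1 : |x| < 1 := lt_trans hx hA1
  have h1x : (0:ℝ) < 1 + x := by cases abs_lt.mp ha1 with | intro h1 h2 => linarith
  have h2x : (0:ℝ) < 1 - x := by cases abs_lt.mp ha1 with | intro h1 h2 => linarith
  -- Ufun |x| = U₁ |x|
  have hU : Ufun μ c₁ c₂ B |x| = U₁ μ c₁ B |x| := by
    unfold Ufun
    rw [if_pos (by linarith : -B < |x|)]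
  -- V₀ x = V₀ |x|
  have hV : V₀ μ c₀ c₁ A B x = V₀ μ c₀ c₁ A B |x| := by
    rcases le_or_gt 0 x with h | h
    · rw [abs_of_nonneg h]
    · rw [abs_of_neg h]
      unfold V₀
      rw [Real.log_div (ne_of_gt h2x) (ne_of_gt h1x),
        Real.log_div (by linarith : (1:ℝ) - -x ≠ 0) (by linarith : (1:ℝ) + -x ≠ 0)]
      have e1 : (1:ℝ) - -x = 1 + x := by ring
      have e2 : (1:ℝ) + -x = 1 - x := by ring
      rw [e1, e2]
      ring_nf
  -- U₁ a - V₀ a = Gfun a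
  have hG : U₁ μ c₁ B |x| - V₀ μ c₀ c₁ A B |x| = Gfun μ c₀ c₁ A B |x| := by
    unfold U₁ V₀ Gfun
    have h1x' : (0:ℝ) < 1 + |x| := by linarith
    have h2x' : (0:ℝ) < 1 - |x| := by linarith
    rw [Real.log_div (ne_of_gt h1x') (ne_of_gt h2x'),
      Real.log_div (ne_of_gt h2x') (ne_of_gt h1x')]
    ring
  have hGnn := Gfun_nonneg μ c₀ c₁ A B hμ hc₀ hc₁ hB hA hhA hGA |x| ha0 hx
  rw [hU, hV]
  linarith

end
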